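/- Modular Buzano inequality: If E is a Hilbert C*-module over a unital C*-algebra A and x, y, z ∈ E with ⟨z, z⟩ = 1 (the identity of A), then ‖⟨x, z⟩⟨z, y⟩‖ ≤ (‖x‖‖y‖ + ‖⟨x, y⟩‖)/2. -/

import Mathlib

/-- The Hilbert C⋆-module class as it stood in Mathlib of December 2024 (right `Aᵐᵒᵖ`-action,
`⟪x, y <• a⟫ = ⟪x, y⟫ * a`); Mathlib's `CStarModule` now uses a left action instead. -/
class CStarModuleRight (A E : Type*) [NonUnitalSemiring A] [StarRing A]
    [Module ℂ A] [AddCommGroup E] [Module ℂ E] [PartialOrder A] [SMul Aᵐᵒᵖ E] [Norm A] [Norm E]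
    extends Inner A E where
  inner_add_right {x} {y} {z} : inner x (y + z) = inner x y + inner x z
  inner_self_nonneg {x} : 0 ≤ inner x x
  inner_self {x} : inner x x = 0 ↔ x = 0
  inner_op_smul_right {a : A} {x y : E} : inner x (MulOpposite.op a • y) = inner x y * a
  inner_smul_right_complex {z : ℂ} {x} {y} : inner x (z • y) = z • inner x y
  star_inner x y : star (inner x y) = inner y x
  norm_eq_sqrt_norm_inner_self x : ‖x‖ = √‖inner x x‖

attribute [simp] CStarModuleRight.inner_add_right CStarModuleRight.star_inner
  CStarModuleRight.inner_op_smul_right CStarModuleRight.inner_smul_right_complex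

namespace CStarModuleRight

section general

variable {A E : Type*} [NonUnitalRing A] [StarRing A] [AddCommGroup E] [Module ℂ A]
  [Module ℂ E] [PartialOrder A] [SMul Aᵐᵒᵖ E] [Norm A] [Norm E] [CStarModuleRight A E]

@[simp]
lemma inner_add_left {x y z : E} : inner A (x + y) z = inner A x z + inner A y z := by
  rw [← star_star (r := inner A (x + y) z)]
  simp only [inner_add_right, star_add, star_inner]

@[simp]
lemma inner_op_smul_left {a : A} {x y : E} :
    inner A (MulOpposite.op a • x) y = star a * inner A x y := by
  rw [← star_inner]; simp

variable [StarModule ℂ A]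

@[simp]
lemma inner_smul_left_complex {z : ℂ} {x y : E} : inner A (z • x) y = star z • inner A x y := by
  rw [← star_inner]
  simp

@[simp]
lemma inner_smul_left_real {z : ℝ} {x y : E} : inner A (z • x) y = z • inner A x y := by
  have h₁ : z • x = (z : ℂ) • x := by simp
  rw [h₁, ← star_inner, inner_smul_right_complex]
  simp

@[simp]
lemma inner_smul_right_real {z : ℝ} {x y : E} : inner A x (z • y) = z • inner A x y := by
  have h₁ : z • y = (z : ℂ) • y := by simp
  rw [h₁, ← star_inner, inner_smul_left_complex]
  simp

/-- The function `⟨x, y⟩ ↦ ⟪x, y⟫` bundled as a sesquilinear map. -/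
def innerₛₗ : E →ₗ⋆[ℂ] E →ₗ[ℂ] A where
  toFun x := { toFun := fun y => inner A x y
               map_add' := fun z y => by simp
               map_smul' := fun z y => by simp }
  map_add' z y := by ext; simp
  map_smul' z y := by ext; simp

lemma innerₛₗ_apply {x y : E} : innerₛₗ x y = inner A x y := rfl

@[simp] lemma inner_zero_right {x : E} : inner A x 0 = 0 := by simp [← innerₛₗ_apply]
@[simp] lemma inner_zero_left {x : E} : inner A 0 x = 0 := by simp [← innerₛₗ_apply]
@[simp] lemma inner_sub_right {x y z : E} : inner A x (y - z) = inner A x y - inner A x z := by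
  simp [← innerₛₗ_apply]
@[simp] lemma inner_sub_left {x y z : E} : inner A (x - y) z = inner A x z - inner A y z := by
  simp [← innerₛₗ_apply]

end general

section norm

variable {A E : Type*} [CStarAlgebra A] [PartialOrder A] [StarOrderedRing A] [AddCommGroup E]
  [Module ℂ E] [SMul Aᵐᵒᵖ E] [Norm E] [CStarModuleRight A E]

omit [StarOrderedRing A] in
lemma norm_pos' (A : Type*) {E : Type*} [CStarAlgebra A] [PartialOrder A] [StarOrderedRing A] [AddCommGroup E]
    [Module ℂ E] [SMul Aᵐᵒᵖ E] [Norm E] [CStarModuleRight A E] {x : E} (hx : x ≠ 0) : 0 < ‖x‖ := by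
  simp only [norm_eq_sqrt_norm_inner_self (A := A), Real.sqrt_pos, norm_pos_iff]
  intro H
  rw [inner_self] at H
  exact hx H

lemma norm_zero' (A : Type*) {E : Type*} [CStarAlgebra A] [PartialOrder A] [StarOrderedRing A] [AddCommGroup E]
    [Module ℂ E] [SMul Aᵐᵒᵖ E] [Norm E] [CStarModuleRight A E] : ‖(0 : E)‖ = 0 := by
  simp [norm_eq_sqrt_norm_inner_self (A := A)]

lemma norm_nonneg' (A : Type*) {E : Type*} [CStarAlgebra A] [PartialOrder A] [StarOrderedRing A] [AddCommGroup E]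
    [Module ℂ E] [SMul Aᵐᵒᵖ E] [Norm E] [CStarModuleRight A E] {x : E} : 0 ≤ ‖x‖ := by simp [norm_eq_sqrt_norm_inner_self (A := A)]

lemma inner_mul_inner_swap_le {x y : E} :
    inner A y x * inner A x y ≤ ‖x‖ ^ 2 • inner A y y := by
  rcases eq_or_ne x 0 with h | h
  · simp [h, norm_zero' A (E := E)]
  · have h₁ : ∀ (a : A),
        (0 : A) ≤ ‖x‖ ^ 2 • (star a * a) - ‖x‖ ^ 2 • (star a * inner A x y)
                  - ‖x‖ ^ 2 • (inner A y x * a) + ‖x‖ ^ 2 • (‖x‖ ^ 2 • inner A y y) := fun a => by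
      calc (0 : A) ≤ inner A (MulOpposite.op a • x - ‖x‖ ^ 2 • y)
                      (MulOpposite.op a • x - ‖x‖ ^ 2 • y) := by
                      exact inner_self_nonneg
            _ = star a * inner A x x * a - ‖x‖ ^ 2 • (star a * inner A x y)
                  - ‖x‖ ^ 2 • (inner A y x * a) + ‖x‖ ^ 2 • (‖x‖ ^ 2 • inner A y y) := by
                      simp only [inner_sub_right, inner_op_smul_right, inner_sub_left,
                        inner_op_smul_left, inner_smul_left_real, sub_mul, smul_mul_assoc,
                        inner_smul_right_real, smul_sub, mul_assoc]
                      abel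
            _ ≤ ‖x‖ ^ 2 • (star a * a) - ‖x‖ ^ 2 • (star a * inner A x y)
                  - ‖x‖ ^ 2 • (inner A y x * a) + ‖x‖ ^ 2 • (‖x‖ ^ 2 • inner A y y) := by
                      gcongr
                      calc _ ≤ ‖inner A x x‖ • (star a * a) :=
                          CStarAlgebra.star_left_conjugate_le_norm_smul (hb := star_inner x x)
                        _ = (√‖inner A x x‖) ^ 2 • (star a * a) := by
                          rw [Real.sq_sqrt]
                          positivity
                        _ = ‖x‖ ^ 2 • (star a * a) := by rw [← norm_eq_sqrt_norm_inner_self]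
    specialize h₁ (inner A x y)
    simp only [star_inner, sub_self, zero_sub, le_neg_add_iff_add_le, add_zero] at h₁
    rwa [smul_le_smul_iff_of_pos_left (pow_pos (norm_pos' A h) _)] at h₁

variable (E) in
lemma norm_inner_le {x y : E} : ‖inner A x y‖ ≤ ‖x‖ * ‖y‖ := by
  have := calc ‖inner A x y‖ ^ 2 = ‖inner A y x * inner A x y‖ := by
                rw [← star_inner x, CStarRing.norm_star_mul_self, pow_two]
    _ ≤ ‖‖x‖ ^ 2 • inner A y y‖ := by
                refine CStarAlgebra.norm_le_norm_of_nonneg_of_le ?_ inner_mul_inner_swap_le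
                rw [← star_inner x]
                exact star_mul_self_nonneg (inner A x y)
    _ = ‖x‖ ^ 2 * ‖inner A y y‖ := by simp [norm_smul]
    _ = ‖x‖ ^ 2 * ‖y‖ ^ 2 := by
                simp only [norm_eq_sqrt_norm_inner_self (A := A), norm_nonneg, Real.sq_sqrt]
    _ = (‖x‖ * ‖y‖) ^ 2 := by simp only [mul_pow]
  refine (pow_le_pow_iff_left₀ (norm_nonneg (inner A x y)) ?_ (by simp)).mp this
  exact mul_nonneg (norm_nonneg' A) (norm_nonneg' A)

end norm

end CStarModuleRight

open CStarModuleRight MulOpposite RightActions in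
/-- **Modular Buzano inequality** (Khosravi–Drnovšek–Moslehian): in a Hilbert C*-module `E`
over a unital C*-algebra `A`, if `⟨z,z⟩ = 1` then
`‖⟨x,z⟩⟨z,y⟩‖ ≤ (‖x‖‖y‖ + ‖⟨x,y⟩‖)/2`. -/
theorem modular_buzano_inequality {A E : Type*} [CStarAlgebra A]
    [PartialOrder A] [StarOrderedRing A] [AddCommGroup E] [Module ℂ E] [SMul Aᵐᵒᵖ E]
    [Norm E] [CStarModuleRight A E] (x y z : E) (hz : (inner A z z : A) = 1) :
    ‖(inner A x z : A) * (inner A z y : A)‖ ≤ (‖x‖ * ‖y‖ + ‖(inner A x y : A)‖) / 2 := by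
  set a : A := inner A x z
  set b : A := inner A z y
  set u : E := (z <• b) + (z <• b) - y with hu
  have hxu : (inner A x u : A) = a * b + a * b - inner A x y := by
    simp [hu, CStarModuleRight.inner_sub_right, CStarModuleRight.inner_add_right, a, b]
  have huu : (inner A u u : A) = inner A y y := by
    have hzb : (inner A (z <• b) (z <• b) : A) = star b * b := by
      simp [inner_op_smul_left, hz]
    have hzy : (inner A (z <• b) y : A) = star b * b := by
      simp [inner_op_smul_left, b]
    have hyz : (inner A y (z <• b) : A) = star b * b := by
      have h : (inner A y z : A) = star b := (CStarModuleRight.star_inner (A := A) z y).symm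
      rw [CStarModuleRight.inner_op_smul_right, h]
    simp only [hu, CStarModuleRight.inner_sub_right, CStarModuleRight.inner_sub_left,
      CStarModuleRight.inner_add_right, CStarModuleRight.inner_add_left, hzb, hzy, hyz]
    abel
  have hnu : ‖u‖ = ‖y‖ := by
    rw [norm_eq_sqrt_norm_inner_self (A := A) u, norm_eq_sqrt_norm_inner_self (A := A) y, huu]
  have hCS : ‖(inner A x u : A)‖ ≤ ‖x‖ * ‖y‖ := hnu ▸ norm_inner_le E
  have h2 : ‖a * b + a * b‖ ≤ ‖x‖ * ‖y‖ + ‖(inner A x y : A)‖ := by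
    calc ‖a * b + a * b‖ = ‖(inner A x u : A) + inner A x y‖ := by rw [hxu, sub_add_cancel]
      _ ≤ ‖(inner A x u : A)‖ + ‖(inner A x y : A)‖ := norm_add_le _ _
      _ ≤ ‖x‖ * ‖y‖ + ‖(inner A x y : A)‖ := by gcongr
  have : ‖a * b + a * b‖ = 2 * ‖a * b‖ := by
    rw [← two_smul ℝ (a * b), norm_smul]; simp
  linarith [h2, this ▸ h2]
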